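/- For all sets A, B ⊆ ℕ: A is enumeration reducible to B if and only if for every C ⊆ ℕ, whenever B is enumeration reducible to C ⊕ (complement of C), then A is enumeration reducible to C ⊕ (complement of C). -/

import Mathlib

set_option maxHeartbeats 1000000

/-- Enumeration reducibility: `A ≤ₑ B` iff there is a c.e. set `W` of axioms
`(k, d)`, where `d` codes the finite set `{i : testBit d i}`, such that
`k ∈ A` iff some axiom `(k, d) ∈ W` has its finite set included in `B`. -/
def EnumReducible (A B : Set ℕ) : Prop :=
  ∃ W : Set (ℕ × ℕ), REPred (· ∈ W) ∧
    ∀ k, k ∈ A ↔ ∃ d, (k, d) ∈ W ∧ ∀ i, Nat.testBit d i = true → i ∈ B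

/-- The join `A ⊕ B = {2n : n ∈ A} ∪ {2n+1 : n ∈ B}`. -/
def setJoin (A B : Set ℕ) : Set ℕ :=
  {n | (n % 2 = 0 ∧ n / 2 ∈ A) ∨ (n % 2 = 1 ∧ n / 2 ∈ B)}

open Nat.Partrec (Code)
open Nat.Partrec.Code
open Encodable Denumerable

namespace Selman


theorem primrec_pow : Primrec₂ (· ^ · : ℕ → ℕ → ℕ) := Primrec₂.unpaired'.1 Nat.Primrec.pow

theorem list_all_primrec {α β : Type} [Primcodable α] [Primcodable β]
    {f : α → List β} {q : α → β → Bool} (hf : Primrec f) (hq : Primrec₂ q) :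
    Primrec fun a => (f a).all (q a) := by
  have h := Primrec.list_foldr (σ := Bool) hf (Primrec.const true)
    (Primrec.and.comp (hq.comp .fst (Primrec.fst.comp .snd)) (Primrec.snd.comp .snd)).to₂
  refine h.of_eq fun a => ?_
  induction f a with
  | nil => rfl
  | cons b l ih => simp [List.all_cons, ih]

theorem list_any_primrec {α β : Type} [Primcodable α] [Primcodable β]
    {f : α → List β} {q : α → β → Bool} (hf : Primrec f) (hq : Primrec₂ q) :
    Primrec fun a => (f a).any (q a) := by
  have h := Primrec.list_foldr (σ := Bool) hf (Primrec.const false)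
    (Primrec.or.comp (hq.comp .fst (Primrec.fst.comp .snd)) (Primrec.snd.comp .snd)).to₂
  refine h.of_eq fun a => ?_
  induction f a with
  | nil => rfl
  | cons b l ih => simp [List.any_cons, ih]

theorem testBit_primrec : Primrec₂ Nat.testBit := by
  have : Primrec₂ fun d i : ℕ => decide (d / 2 ^ i % 2 = 1) := by
    have h1 : Primrec fun p : ℕ × ℕ => p.1 / 2 ^ p.2 % 2 :=
      Primrec.nat_mod.comp
        (Primrec.nat_div.comp .fst (primrec_pow.comp (Primrec.const 2) .snd)) (Primrec.const 2)
    exact (Primrec.eq.comp h1 (Primrec.const 1)).decide.to₂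
  exact this.of_eq fun d i => (Nat.testBit_eq_decide_div_mod_eq).symm

theorem testBit_lt {d i : ℕ} (h : Nat.testBit d i = true) : i < d :=
  lt_of_lt_of_le (Nat.lt_two_pow_self (n := i)) (Nat.ge_two_pow_of_testBit h)

theorem re_iff {α : Type} [Primcodable α] (p : α → Prop) :
    REPred p ↔ ∃ f : α → ℕ → Bool, Primrec₂ f ∧
      (∀ a s t, s ≤ t → f a s = true → f a t = true) ∧ (∀ a, p a ↔ ∃ s, f a s = true) := by
  constructor
  · intro hp
    unfold REPred at hp
    obtain ⟨c, hc⟩ := Nat.Partrec.Code.exists_code.1 hp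
    refine ⟨fun a s => (evaln s c (Encodable.encode a)).isSome, ?_, ?_, ?_⟩
    · exact (Primrec.option_isSome.comp <|
        primrec_evaln.comp <| ((Primrec.snd).pair (Primrec.const c)).pair
          (Primrec.encode.comp Primrec.fst)).to₂
    · intro a s t hst h
      rcases Option.isSome_iff_exists.1 h with ⟨x, hx⟩
      exact Option.isSome_iff_exists.2 ⟨x, evaln_mono hst hx⟩
    · intro a
      have hdom : p a ↔ (eval c (Encodable.encode a)).Dom := by
        have := congrFun hc (Encodable.encode a)
        simp only at this
        rw [this]
        simp [Encodable.encodek, Part.dom_iff_mem, Part.mem_assert_iff]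
      rw [hdom, Part.dom_iff_mem]
      constructor
      · rintro ⟨x, hx⟩
        rcases evaln_complete.1 hx with ⟨k, hk⟩
        exact ⟨k, Option.isSome_iff_exists.2 ⟨x, hk⟩⟩
      · rintro ⟨s, hs⟩
        rcases Option.isSome_iff_exists.1 hs with ⟨x, hx⟩
        exact ⟨x, evaln_complete.2 ⟨s, hx⟩⟩
  · rintro ⟨f, hf, _, hpf⟩
    unfold REPred
    have h1 : Partrec fun a => Nat.rfind fun s => Part.some (f a s) := by
      apply Partrec.rfind
      exact hf.to_comp.partrec₂
    have h2 : Partrec fun a => (Nat.rfind fun s => Part.some (f a s)).map fun _ => () :=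
      h1.map (Computable.const ()).to₂
    apply h2.of_eq
    intro a
    apply Part.ext
    intro u
    simp only [Part.mem_map_iff, Part.mem_assert_iff, Part.mem_some_iff]
    constructor
    · rintro ⟨n, hn, -⟩
      have hsp := Nat.rfind_spec hn
      simp only [Part.mem_some_iff] at hsp
      exact ⟨(hpf a).2 ⟨n, hsp.symm⟩, trivial⟩
    · rintro ⟨h, -⟩
      obtain ⟨s, hs⟩ := (hpf a).1 h
      obtain ⟨n, hn, -⟩ := Nat.rfind_min' (p := fun s => f a s) hs
      exact ⟨n, hn, trivial⟩

theorem re_of_exists_bool {α : Type} [Primcodable α] {p : α → Prop} {g : α → ℕ → Bool}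
    (hg : Primrec₂ g) (h : ∀ a, p a ↔ ∃ N, g a N = true) : REPred p := by
  refine (re_iff p).2 ⟨fun a s => (List.range (s+1)).any (g a), ?_, ?_, ?_⟩
  · exact (list_any_primrec (Primrec.list_range.comp (Primrec.succ.comp .snd))
      (hg.comp (Primrec.fst.comp .fst) .snd).to₂).to₂
  · intro a s t hst hs
    rcases List.any_eq_true.1 hs with ⟨N, hN, hgN⟩
    exact List.any_eq_true.2 ⟨N, List.mem_range.2 (lt_of_lt_of_le (List.mem_range.1 hN)
      (Nat.succ_le_succ hst)), hgN⟩
  · intro a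
    rw [h a]
    constructor
    · rintro ⟨N, hN⟩
      exact ⟨N, List.any_eq_true.2 ⟨N, List.mem_range.2 (Nat.lt_succ_self N), hN⟩⟩
    · rintro ⟨s, hs⟩
      rcases List.any_eq_true.1 hs with ⟨N, _, hN⟩
      exact ⟨N, hN⟩

theorem re_code {α : Type} [Primcodable α] {p : α → Prop} (hp : REPred p) :
    ∃ c : Code, ∀ a, p a ↔ (eval c (Encodable.encode a)).Dom := by
  obtain ⟨c, hc⟩ := Nat.Partrec.Code.exists_code.1 hp
  refine ⟨c, fun a => ?_⟩
  have := congrFun hc (Encodable.encode a)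
  simp only at this
  rw [this]
  simp [Encodable.encodek, Part.dom_iff_mem, Part.mem_assert_iff]

theorem testBit_foldr_or (l : List ℕ) (j : ℕ) :
    (l.foldr (· ||| ·) 0).testBit j = l.any (fun x => x.testBit j) := by
  induction l with
  | nil => simp
  | cons x l ih => simp [Nat.testBit_or, ih]

theorem le_foldr_max (l : List ℕ) : ∀ x ∈ l, x ≤ l.foldr max 0 := by
  induction l with
  | nil => simp
  | cons y l ih =>
    intro x hx
    rcases List.mem_cons.1 hx with rfl | hx
    · exact le_max_left _ _
    · exact le_trans (ih x hx) (le_max_right _ _)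


theorem enum_trans {A B X : Set ℕ} (hAB : EnumReducible A B) (hBX : EnumReducible B X) :
    EnumReducible A X := by
  classical
  obtain ⟨W, hWre, hWmem⟩ := hAB
  obtain ⟨V, hVre, hVmem⟩ := hBX
  obtain ⟨fW, hfWp, hfWmono, hfW⟩ := (re_iff _).1 hWre
  obtain ⟨fV, hfVp, hfVmono, hfV⟩ := (re_iff _).1 hVre
  set gU : (ℕ×ℕ) → ℕ → Bool := fun x N =>
    fW (x.1, N.unpair.1) N.unpair.2 &&
    ((List.range N.unpair.1).all fun i => !(N.unpair.1.testBit i) ||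
      ((List.range N.unpair.2).any fun e' => fV (i, e') N.unpair.2 &&
        ((List.range e').all fun j => !(e'.testBit j) || x.2.testBit j))) with hgU
  have hgUp : Primrec₂ gU := by
    -- context p : (ℕ×ℕ) × ℕ
    have pd : Primrec fun p : (ℕ×ℕ)×ℕ => p.2.unpair.1 :=
      Primrec.fst.comp (Primrec.unpair.comp .snd)
    have ps : Primrec fun p : (ℕ×ℕ)×ℕ => p.2.unpair.2 :=
      Primrec.snd.comp (Primrec.unpair.comp .snd)
    have h1 : Primrec fun p : (ℕ×ℕ)×ℕ => fW (p.1.1, p.2.unpair.1) p.2.unpair.2 :=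
      hfWp.comp ((Primrec.fst.comp .fst).pair pd) ps
    -- innermost: over a : ((((ℕ×ℕ)×ℕ)×ℕ)×ℕ) = (((x,N),i),e') and j : ℕ
    have hinner : Primrec fun a : (((ℕ×ℕ)×ℕ)×ℕ)×ℕ =>
        (List.range a.2).all fun j => !(a.2.testBit j) || a.1.1.1.2.testBit j := by
      apply list_all_primrec (Primrec.list_range.comp .snd)
      have ht1 : Primrec fun q : ((((ℕ×ℕ)×ℕ)×ℕ)×ℕ)×ℕ => !(q.1.2.testBit q.2) :=
        Primrec.not.comp (testBit_primrec.comp (Primrec.snd.comp .fst) .snd)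
      have ht2 : Primrec fun q : ((((ℕ×ℕ)×ℕ)×ℕ)×ℕ)×ℕ => q.1.1.1.1.2.testBit q.2 :=
        testBit_primrec.comp
          (Primrec.snd.comp (Primrec.fst.comp (Primrec.fst.comp
            (Primrec.fst.comp .fst)))) .snd
      exact (Primrec.or.comp ht1 ht2).to₂
    have hany : Primrec fun a : ((ℕ×ℕ)×ℕ)×ℕ =>
        (List.range a.1.2.unpair.2).any fun e' => fV (a.2, e') a.1.2.unpair.2 &&
          ((List.range e').all fun j => !(e'.testBit j) || a.1.1.2.testBit j) := by
      apply list_any_primrec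
        (Primrec.list_range.comp (Primrec.snd.comp (Primrec.unpair.comp
          (Primrec.snd.comp .fst))))
      have hv : Primrec fun q : (((ℕ×ℕ)×ℕ)×ℕ)×ℕ =>
          fV (q.1.2, q.2) q.1.1.2.unpair.2 :=
        hfVp.comp ((Primrec.snd.comp .fst).pair .snd)
          (Primrec.snd.comp (Primrec.unpair.comp (Primrec.snd.comp (Primrec.fst.comp .fst))))
      exact (Primrec.and.comp hv hinner).to₂
    have hall : Primrec fun p : (ℕ×ℕ)×ℕ =>
        (List.range p.2.unpair.1).all fun i => !(p.2.unpair.1.testBit i) ||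
          ((List.range p.2.unpair.2).any fun e' => fV (i, e') p.2.unpair.2 &&
            ((List.range e').all fun j => !(e'.testBit j) || p.1.2.testBit j)) := by
      apply list_all_primrec (Primrec.list_range.comp pd)
      have hb : Primrec fun a : ((ℕ×ℕ)×ℕ)×ℕ => !(a.1.2.unpair.1.testBit a.2) :=
        Primrec.not.comp (testBit_primrec.comp (pd.comp .fst) .snd)
      exact (Primrec.or.comp hb hany).to₂
    exact (Primrec.and.comp h1 hall).to₂
  refine ⟨{x | ∃ N, gU x N = true}, re_of_exists_bool hgUp (fun a => Iff.rfl), fun k => ?_⟩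
  constructor
  · intro hk
    obtain ⟨d, hdW, hdB⟩ := (hWmem k).1 hk
    have hVx : ∀ i, d.testBit i = true →
        ∃ e', (i, e') ∈ V ∧ ∀ j, e'.testBit j = true → j ∈ X :=
      fun i hi => (hVmem i).1 (hdB i hi)
    choose hfun hmem hsub using hVx
    set h' : ℕ → ℕ := fun i => if hi : d.testBit i = true then hfun i hi else 0 with hh'
    set l : List ℕ := (List.range d).filter (fun i => d.testBit i) with hl
    set e : ℕ := (l.map h').foldr (· ||| ·) 0 with he
    have hbitsE : ∀ j, e.testBit j = true ↔ ∃ i ∈ l, (h' i).testBit j = true := by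
      intro j
      rw [he, testBit_foldr_or, List.any_map, List.any_eq_true]
      simp
    -- choose the stage
    obtain ⟨sW, hsW⟩ := (hfW (k, d)).1 hdW
    set sV : ℕ → ℕ := fun i => if hi : d.testBit i = true
      then Classical.choose ((hfV (i, hfun i hi)).1 (hmem i hi)) else 0 with hsV
    set s : ℕ := (sW :: l.map fun i => max (h' i + 1) (sV i)).foldr max 0 with hs
    have hsW' : sW ≤ s := le_foldr_max _ _ List.mem_cons_self
    have hsl : ∀ i ∈ l, max (h' i + 1) (sV i) ≤ s := fun i hi =>
      le_foldr_max _ _ (List.mem_cons_of_mem _ (List.mem_map_of_mem hi))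
    refine ⟨e, ⟨Nat.pair d s, ?_⟩, ?_⟩
    · rw [hgU]
      simp only [Nat.unpair_pair, Bool.and_eq_true]
      constructor
      · exact hfWmono _ _ _ hsW' hsW
      · rw [List.all_eq_true]
        intro i hi
        rcases hbit : d.testBit i with _ | _
        · simp [hbit]
        · have hil : i ∈ l := by
            rw [hl]; exact List.mem_filter.2 ⟨hi, by simp [hbit]⟩
          simp only [hbit, Bool.not_true, Bool.false_or]
          rw [List.any_eq_true]
          refine ⟨h' i, List.mem_range.2 ?_, ?_⟩
          · exact lt_of_lt_of_le (Nat.lt_succ_self _)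
              (le_trans (le_max_left _ _) (hsl i hil))
          · rw [Bool.and_eq_true]
            constructor
            · have hfv := Classical.choose_spec ((hfV (i, hfun i hbit)).1 (hmem i hbit))
              have : h' i = hfun i hbit := by rw [hh']; simp [hbit]
              rw [this]
              exact hfVmono _ _ _ (le_trans (le_max_right _ _) (hsl i hil)) (by
                rw [hsV]; simpa [hbit] using hfv)
            · rw [List.all_eq_true]
              intro j hj
              rcases hbit2 : (h' i).testBit j with _ | _
              · simp
              · simp only [Bool.not_true, Bool.false_or]
                exact (hbitsE j).2 ⟨i, hil, hbit2⟩
    · intro j hj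
      obtain ⟨i, hil, hbit2⟩ := (hbitsE j).1 hj
      have hbit : d.testBit i = true := by
        have := (List.mem_filter.1 (hl ▸ hil)).2
        simpa using this
      have : h' i = hfun i hbit := by rw [hh']; simp [hbit]
      exact hsub i hbit j (this ▸ hbit2)
  · rintro ⟨e, ⟨N, hg⟩, heX⟩
    rw [hgU] at hg
    simp only [Bool.and_eq_true] at hg
    obtain ⟨hw, hall⟩ := hg
    apply (hWmem k).2
    refine ⟨N.unpair.1, (hfW _).2 ⟨_, hw⟩, ?_⟩
    intro i hi
    have hi' : i ∈ List.range N.unpair.1 := List.mem_range.2 (testBit_lt hi)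
    have := List.all_eq_true.1 hall i hi'
    simp only [hi, Bool.not_true, Bool.false_or] at this
    obtain ⟨e', he', hcond⟩ := List.any_eq_true.1 this
    rw [Bool.and_eq_true] at hcond
    obtain ⟨hv, hincl⟩ := hcond
    apply (hVmem i).2
    refine ⟨e', (hfV _).2 ⟨_, hv⟩, ?_⟩
    intro j hj
    have hj' : j ∈ List.range e' := List.mem_range.2 (testBit_lt hj)
    have := List.all_eq_true.1 hincl j hj'
    simp only [hj, Bool.not_true, Bool.false_or] at this
    exact heX j this


/-! ### Forcing conditions -/


def SF (σ : List ℕ) (d : ℕ) : Prop :=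
  ∀ m : ℕ,
    (d.testBit (2*m) = true → m.unpair.1 < σ.length ∧ σ.getD m.unpair.1 0 = m.unpair.2) ∧
    (d.testBit (2*m+1) = true → m.unpair.1 < σ.length ∧ σ.getD m.unpair.1 0 ≠ m.unpair.2)

def SFb (σ : List ℕ) (d : ℕ) : Bool :=
  (List.range d).all fun i => !(d.testBit i) ||
    (decide ((i/2).unpair.1 < σ.length) &&
      (if i % 2 = 1 then !decide (σ.getD (i/2).unpair.1 0 = (i/2).unpair.2)
       else decide (σ.getD (i/2).unpair.1 0 = (i/2).unpair.2)))

theorem SFb_primrec : Primrec₂ SFb := by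
  have hm : Primrec fun q : (List ℕ × ℕ) × ℕ => (q.2/2).unpair :=
    Primrec.unpair.comp (Primrec.nat_div.comp .snd (Primrec.const 2))
  have h1 : Primrec fun q : (List ℕ × ℕ) × ℕ => decide ((q.2/2).unpair.1 < q.1.1.length) :=
    Primrec.nat_lt.comp (Primrec.fst.comp hm)
      (Primrec.list_length.comp (Primrec.fst.comp .fst)) |>.decide
  have h2 : Primrec fun q : (List ℕ × ℕ) × ℕ =>
      decide (q.1.1.getD (q.2/2).unpair.1 0 = (q.2/2).unpair.2) :=
    Primrec.eq.comp ((Primrec.list_getD 0).comp (Primrec.fst.comp .fst) (Primrec.fst.comp hm))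
      (Primrec.snd.comp hm) |>.decide
  have h3 : Primrec fun q : (List ℕ × ℕ) × ℕ => decide (q.2 % 2 = 1) :=
    (Primrec.eq.comp (Primrec.nat_mod.comp .snd (Primrec.const 2)) (Primrec.const 1)).decide
  have h4 : Primrec fun q : (List ℕ × ℕ) × ℕ => !(q.1.2.testBit q.2) :=
    Primrec.not.comp (testBit_primrec.comp (Primrec.snd.comp .fst) .snd)
  have h3' : PrimrecPred fun q : (List ℕ × ℕ) × ℕ => q.2 % 2 = 1 := h3.primrecPred
  have hif : Primrec fun q : (List ℕ × ℕ) × ℕ =>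
      if q.2 % 2 = 1 then !decide (q.1.1.getD (q.2/2).unpair.1 0 = (q.2/2).unpair.2)
      else decide (q.1.1.getD (q.2/2).unpair.1 0 = (q.2/2).unpair.2) :=
    Primrec.ite h3' (Primrec.not.comp h2) h2
  exact (list_all_primrec (Primrec.list_range.comp .snd)
    (Primrec.or.comp h4 (Primrec.and.comp h1 hif)).to₂).to₂

theorem SFb_iff {σ : List ℕ} {d : ℕ} : SFb σ d = true ↔ SF σ d := by
  constructor
  · intro h m
    have hall := List.all_eq_true.1 h
    constructor
    · intro hbit
      have hi := hall _ (List.mem_range.2 (testBit_lt hbit))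
      have e1 : 2*m/2 = m := by omega
      have e2 : 2*m % 2 = 0 := by omega
      simp only [hbit, Bool.not_true, Bool.false_or, e1, e2, Bool.and_eq_true,
        decide_eq_true_eq, if_neg (by omega : ¬(0:ℕ) = 1)] at hi
      exact ⟨hi.1, hi.2⟩
    · intro hbit
      have hi := hall _ (List.mem_range.2 (testBit_lt hbit))
      have e1 : (2*m+1)/2 = m := by omega
      have e2 : (2*m+1) % 2 = 1 := by omega
      simp only [hbit, Bool.not_true, Bool.false_or, e1, e2, Bool.and_eq_true,
        decide_eq_true_eq, if_true, Bool.not_eq_true', decide_eq_false_iff_not] at hi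
      exact ⟨hi.1, hi.2⟩
  · intro h
    rw [SFb, List.all_eq_true]
    intro i _
    rcases hbit : d.testBit i with _ | _
    · simp
    · simp only [Bool.not_true, Bool.false_or]
      rcases Nat.mod_two_eq_zero_or_one i with h2 | h2
      · have e1 : i = 2*(i/2) := by omega
        obtain ⟨hlt, heq⟩ := (h (i/2)).1 (by rw [← e1]; exact hbit)
        simp only [hlt, h2, decide_true, Bool.true_and, if_neg (by omega : ¬(0:ℕ) = 1)]
        simpa using heq
      · have e1 : i = 2*(i/2)+1 := by omega
        obtain ⟨hlt, hne⟩ := (h (i/2)).2 (by rw [← e1]; exact hbit)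
        simp only [hlt, h2, decide_true, Bool.true_and, if_pos rfl, Bool.not_eq_true',
          decide_eq_false_iff_not]
        simpa using hne

def Cf (f : ℕ → ℕ) : Set ℕ := {m | f m.unpair.1 = m.unpair.2}

theorem join_even (f : ℕ → ℕ) (m : ℕ) :
    2*m ∈ setJoin (Cf f) (Cf f)ᶜ ↔ f m.unpair.1 = m.unpair.2 := by
  have h1 : 2*m % 2 = 0 := by omega
  have h2 : 2*m/2 = m := by omega
  simp [setJoin, Cf, h1, h2]

theorem join_odd (f : ℕ → ℕ) (m : ℕ) :
    2*m+1 ∈ setJoin (Cf f) (Cf f)ᶜ ↔ f m.unpair.1 ≠ m.unpair.2 := by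
  have h1 : (2*m+1) % 2 = 1 := by omega
  have h2 : (2*m+1)/2 = m := by omega
  simp [setJoin, Cf, h1, h2]

def Extends (σ : List ℕ) (f : ℕ → ℕ) : Prop := ∀ n, n < σ.length → σ.getD n 0 = f n

theorem getD_prefix {σ τ : List ℕ} (h : σ <+: τ) {n : ℕ} (hn : n < σ.length) :
    τ.getD n 0 = σ.getD n 0 := by
  obtain ⟨t, rfl⟩ := h
  exact List.getD_append _ _ _ _ hn

theorem Extends.of_prefix {σ τ : List ℕ} {f : ℕ → ℕ} (h : σ <+: τ) (he : Extends τ f) :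
    Extends σ f := fun n hn => by
  rw [← getD_prefix h hn]; exact he n (lt_of_lt_of_le hn h.length_le)

theorem SF_mono {σ τ : List ℕ} {d : ℕ} (h : σ <+: τ) (hSF : SF σ d) : SF τ d := by
  intro m
  refine ⟨fun hb => ?_, fun hb => ?_⟩
  · obtain ⟨hlt, heq⟩ := (hSF m).1 hb
    exact ⟨lt_of_lt_of_le hlt h.length_le, by rw [getD_prefix h hlt]; exact heq⟩
  · obtain ⟨hlt, hne⟩ := (hSF m).2 hb
    exact ⟨lt_of_lt_of_le hlt h.length_le, by rw [getD_prefix h hlt]; exact hne⟩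

theorem SF_sat {σ : List ℕ} {d : ℕ} {f : ℕ → ℕ} (hSF : SF σ d) (hext : Extends σ f) :
    ∀ i, d.testBit i = true → i ∈ setJoin (Cf f) (Cf f)ᶜ := by
  intro i hi
  rcases Nat.mod_two_eq_zero_or_one i with h2 | h2
  · have e1 : i = 2*(i/2) := by omega
    rw [e1] at hi ⊢
    obtain ⟨hlt, heq⟩ := (hSF (i/2)).1 hi
    exact (join_even f _).2 (by rw [← hext _ hlt]; exact heq)
  · have e1 : i = 2*(i/2)+1 := by omega
    rw [e1] at hi ⊢
    obtain ⟨hlt, hne⟩ := (hSF (i/2)).2 hi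
    exact (join_odd f _).2 (by rw [← hext _ hlt]; exact hne)

/-! ### Extension lists -/

def extList (σ : List ℕ) (f : ℕ → ℕ) (L : ℕ) : List ℕ :=
  σ ++ (List.range (L - σ.length)).map (fun j => f (σ.length + j))

theorem extList_prefix (σ : List ℕ) (f : ℕ → ℕ) (L : ℕ) : σ <+: extList σ f L :=
  List.prefix_append _ _

theorem extList_length (σ : List ℕ) (f : ℕ → ℕ) (L : ℕ) :
    (extList σ f L).length = σ.length + (L - σ.length) := by
  simp [extList]

theorem extList_getD {σ : List ℕ} {f : ℕ → ℕ} {L : ℕ} (hext : Extends σ f)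
    {n : ℕ} (hn : n < (extList σ f L).length) : (extList σ f L).getD n 0 = f n := by
  rcases lt_or_ge n σ.length with h | h
  · rw [getD_prefix (extList_prefix σ f L) h]; exact hext n h
  · rw [extList, List.getD_append_right _ _ _ _ h]
    rw [extList_length] at hn
    have hn' : n - σ.length < L - σ.length := by omega
    rw [List.getD_eq_getElem _ _ (by simpa using hn')]
    simp only [List.getElem_map, List.getElem_range]
    congr 1
    omega

theorem extList_extends {σ : List ℕ} {f : ℕ → ℕ} (hext : Extends σ f) (L : ℕ) :
    Extends (extList σ f L) f := fun n hn => extList_getD hext hn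

theorem extList_mem {σ : List ℕ} {f : ℕ → ℕ} {L : ℕ} {x : ℕ} (hx : x ∈ extList σ f L) :
    x ∈ σ ∨ ∃ n, x = f n := by
  rcases List.mem_append.1 hx with h | h
  · exact Or.inl h
  · obtain ⟨j, _, rfl⟩ := List.mem_map.1 h
    exact Or.inr ⟨_, rfl⟩

theorem SF_ext {σ : List ℕ} {f : ℕ → ℕ} {d : ℕ}
    (hd : ∀ i, d.testBit i = true → i ∈ setJoin (Cf f) (Cf f)ᶜ)
    (hext : Extends σ f) : SF (extList σ f d) d := by
  have hlen : d ≤ (extList σ f d).length := by rw [extList_length]; omega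
  intro m
  constructor
  · intro hb
    have hmlt : m.unpair.1 < (extList σ f d).length := by
      have h1 := Nat.unpair_left_le m
      have h2 := testBit_lt hb
      omega
    refine ⟨hmlt, ?_⟩
    rw [extList_getD hext hmlt]
    exact (join_even f m).1 (hd _ hb)
  · intro hb
    have hmlt : m.unpair.1 < (extList σ f d).length := by
      have h1 := Nat.unpair_left_le m
      have h2 := testBit_lt hb
      omega
    refine ⟨hmlt, ?_⟩
    rw [extList_getD hext hmlt]
    exact (join_odd f m).1 (hd _ hb)


def EvalDom (c : Code) (x : ℕ × ℕ) : Prop := (eval c (Encodable.encode x)).Dom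

def Good (B : Set ℕ) (σ : List ℕ) : Prop := ∀ x ∈ σ, x ∈ B

/-- The set `D_σ` of numbers weakly forced into the `c`-th operator applied to
the join coded by any `B`-valued extension of `σ` is enumeration reducible to `B`. -/
theorem Dset_red (B : Set ℕ) (c : Code) (σ : List ℕ) (hσ : Good B σ) :
    EnumReducible {k | ∃ d, EvalDom c (k, d) ∧ ∃ τ, σ <+: τ ∧ Good B τ ∧ SF τ d} B := by
  classical
  set gW : ℕ × ℕ → ℕ → Bool := fun x N =>
    ((evaln N.unpair.2.unpair.2 c (Encodable.encode (x.1, N.unpair.1))).isSome &&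
      SFb (σ ++ ofNat (List ℕ) N.unpair.2.unpair.1) N.unpair.1) &&
      (ofNat (List ℕ) N.unpair.2.unpair.1).all (fun y => x.2.testBit y) with hgW
  have hprim : Primrec₂ gW := by
    have pd : Primrec fun p : (ℕ×ℕ)×ℕ => p.2.unpair.1 :=
      Primrec.fst.comp (Primrec.unpair.comp .snd)
    have pt : Primrec fun p : (ℕ×ℕ)×ℕ => ofNat (List ℕ) p.2.unpair.2.unpair.1 :=
      (Primrec.ofNat (List ℕ)).comp
        (Primrec.fst.comp (Primrec.unpair.comp (Primrec.snd.comp (Primrec.unpair.comp .snd))))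
    have ps : Primrec fun p : (ℕ×ℕ)×ℕ => p.2.unpair.2.unpair.2 :=
      Primrec.snd.comp (Primrec.unpair.comp (Primrec.snd.comp (Primrec.unpair.comp .snd)))
    have h1 : Primrec fun p : (ℕ×ℕ)×ℕ =>
        (evaln p.2.unpair.2.unpair.2 c (Encodable.encode (p.1.1, p.2.unpair.1))).isSome :=
      Primrec.option_isSome.comp (primrec_evaln.comp ((ps.pair (Primrec.const c)).pair
        (Primrec.encode.comp ((Primrec.fst.comp .fst).pair pd))))
    have h2 : Primrec fun p : (ℕ×ℕ)×ℕ =>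
        SFb (σ ++ ofNat (List ℕ) p.2.unpair.2.unpair.1) p.2.unpair.1 :=
      SFb_primrec.comp (Primrec.list_append.comp (Primrec.const σ) pt) pd
    have h3 : Primrec fun p : (ℕ×ℕ)×ℕ =>
        (ofNat (List ℕ) p.2.unpair.2.unpair.1).all (fun y => p.1.2.testBit y) :=
      list_all_primrec pt
        (testBit_primrec.comp (Primrec.snd.comp (Primrec.fst.comp .fst)) .snd).to₂
    exact (Primrec.and.comp (Primrec.and.comp h1 h2) h3).to₂
  refine ⟨{x | ∃ N, gW x N = true}, re_of_exists_bool hprim (fun _ => Iff.rfl), fun k => ?_⟩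
  constructor
  · rintro ⟨d, hdom, τ, hpre, hgood, hSF⟩
    obtain ⟨t, rfl⟩ := hpre
    set e : ℕ := (t.map (2 ^ ·)).foldr (· ||| ·) 0 with he
    have hbitsE : ∀ j, e.testBit j = true ↔ j ∈ t := by
      intro j
      rw [he, testBit_foldr_or, List.any_map, List.any_eq_true]
      constructor
      · rintro ⟨x, hx, hbit⟩
        simp only [Function.comp, Nat.testBit_two_pow, decide_eq_true_eq] at hbit
        exact hbit ▸ hx
      · intro hj
        refine ⟨j, hj, ?_⟩
        simp [Function.comp, Nat.testBit_two_pow]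
    obtain ⟨v, hv⟩ := Part.dom_iff_mem.1 hdom
    obtain ⟨s, hs⟩ := evaln_complete.1 hv
    refine ⟨e, ⟨Nat.pair d (Nat.pair (Encodable.encode t) s), ?_⟩, ?_⟩
    · rw [hgW]
      simp only [Nat.unpair_pair, ofNat_encode, Bool.and_eq_true]
      refine ⟨⟨Option.isSome_iff_exists.2 ⟨v, hs⟩, SFb_iff.2 hSF⟩, ?_⟩
      rw [List.all_eq_true]
      intro y hy
      exact (hbitsE y).2 hy
    · intro j hj
      exact hgood j (List.mem_append.2 (Or.inr ((hbitsE j).1 hj)))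
  · rintro ⟨e, ⟨N, hg⟩, heB⟩
    rw [hgW] at hg
    simp only [Bool.and_eq_true] at hg
    obtain ⟨⟨hev, hsfb⟩, hall⟩ := hg
    obtain ⟨v, hv⟩ := Option.isSome_iff_exists.1 hev
    refine ⟨N.unpair.1, Part.dom_iff_mem.2 ⟨v, evaln_sound hv⟩,
      σ ++ ofNat (List ℕ) N.unpair.2.unpair.1, List.prefix_append _ _, ?_, SFb_iff.1 hsfb⟩
    intro x hx
    rcases List.mem_append.1 hx with h | h
    · exact hσ x h
    · exact heB x (List.all_eq_true.1 hall x h)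

/-- If `f` enumerates `B` then `B` is enumeration reducible to the join of the
graph of `f` with its complement. -/
theorem B_red {B : Set ℕ} {f : ℕ → ℕ} (hmem : ∀ n, f n ∈ B)
    (hsurj : ∀ k ∈ B, ∃ n, f n = k) :
    EnumReducible B (setJoin (Cf f) (Cf f)ᶜ) := by
  refine ⟨{x | ∃ n, x.2 = 2^(2 * Nat.pair n x.1)},
    re_of_exists_bool (g := fun x N => decide (x.2 = 2^(2 * Nat.pair N x.1))) ?_
      (fun a => by simp), fun k => ?_⟩
  · have : Primrec fun p : (ℕ×ℕ)×ℕ => decide (p.1.2 = 2^(2 * Nat.pair p.2 p.1.1)) :=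
      Primrec.eq.comp (Primrec.snd.comp .fst)
        (primrec_pow.comp (Primrec.const 2)
          (Primrec.nat_mul.comp (Primrec.const 2)
            (Primrec₂.natPair.comp .snd (Primrec.fst.comp .fst)))) |>.decide
    exact this.to₂
  · constructor
    · intro hk
      obtain ⟨n, rfl⟩ := hsurj k hk
      refine ⟨2^(2 * Nat.pair n (f n)), ⟨n, rfl⟩, ?_⟩
      intro i hi
      rw [Nat.testBit_two_pow, decide_eq_true_eq] at hi
      rw [← hi]
      exact (join_even f _).2 (by rw [Nat.unpair_pair])
    · rintro ⟨d, ⟨n, hd⟩, hb⟩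
      have hd' : d = 2^(2 * Nat.pair n k) := hd
      subst hd'
      have hbit : (2^(2 * Nat.pair n k)).testBit (2 * Nat.pair n k) = true := by
        simp [Nat.testBit_two_pow]
      have h2 : f n = k := by
        simpa [Nat.unpair_pair] using (join_even f _).1 (hb _ hbit)
      exact h2 ▸ hmem n


def Q (A B : Set ℕ) (s : ℕ) (σ : List ℕ) : Prop :=
  ∃ τ, σ <+: τ ∧ Good B τ ∧ ∃ k d, k ∉ A ∧ EvalDom (ofNat Code s) (k, d) ∧ SF τ d

open Classical in
noncomputable def gB (B : Set ℕ) (b₀ : ℕ) (n : ℕ) : ℕ := if n ∈ B then n else b₀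

open Classical in
noncomputable def seq (A B : Set ℕ) (b₀ : ℕ) : ℕ → List ℕ
  | 0 => []
  | s+1 => (if h : Q A B s (seq A B b₀ s) then h.choose else seq A B b₀ s) ++ [gB B b₀ s]

theorem seq_prefix_succ (A B : Set ℕ) (b₀ s : ℕ) : seq A B b₀ s <+: seq A B b₀ (s+1) := by
  rw [seq]
  split
  · next h => exact h.choose_spec.1.trans (List.prefix_append _ _)
  · exact List.prefix_append _ _

theorem seq_prefix (A B : Set ℕ) (b₀ : ℕ) {s t : ℕ} (h : s ≤ t) :
    seq A B b₀ s <+: seq A B b₀ t := by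
  induction t with
  | zero => rw [Nat.le_zero.1 h]
  | succ t ih =>
    rcases Nat.lt_or_ge s (t+1) with h' | h'
    · exact (ih (Nat.lt_succ_iff.1 h')).trans (seq_prefix_succ A B b₀ t)
    · rw [Nat.le_antisymm h h']

theorem seq_good (A B : Set ℕ) {b₀ : ℕ} (hb : b₀ ∈ B) (s : ℕ) : Good B (seq A B b₀ s) := by
  induction s with
  | zero => intro x hx; simp [seq] at hx
  | succ s ih =>
    intro x hx
    rw [seq] at hx
    rcases List.mem_append.1 hx with h | h
    · revert h
      split
      · next hq => exact fun h => hq.choose_spec.2.1 x h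
      · exact fun h => ih x h
    · have : x = gB B b₀ s := by simpa using h
      rw [this, gB]
      split
      · assumption
      · exact hb

theorem seq_succ (A B : Set ℕ) (b₀ s : ℕ) : ∃ ρ : List ℕ,
    seq A B b₀ (s+1) = ρ ++ [gB B b₀ s] ∧ seq A B b₀ s <+: ρ := by
  classical
  by_cases h : Q A B s (seq A B b₀ s)
  · exact ⟨h.choose, by rw [seq, dif_pos h], h.choose_spec.1⟩
  · exact ⟨_, by rw [seq, dif_neg h], List.prefix_refl _⟩

theorem seq_len (A B : Set ℕ) (b₀ : ℕ) (s : ℕ) : s ≤ (seq A B b₀ s).length := by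
  induction s with
  | zero => simp
  | succ s ih =>
    obtain ⟨ρ, heq, hpre⟩ := seq_succ A B b₀ s
    rw [heq, List.length_append]
    have := hpre.length_le
    simp only [List.length_singleton]
    omega

noncomputable def fB (A B : Set ℕ) (b₀ : ℕ) (n : ℕ) : ℕ := (seq A B b₀ (n+1)).getD n 0

theorem fB_extends (A B : Set ℕ) (b₀ s : ℕ) : Extends (seq A B b₀ s) (fB A B b₀) := by
  intro n hn
  rcases le_total s (n+1) with h | h
  · exact (getD_prefix (seq_prefix A B b₀ h) hn).symm
  · have hn' : n < (seq A B b₀ (n+1)).length :=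
      lt_of_lt_of_le (Nat.lt_succ_self n) (seq_len A B b₀ (n+1))
    rw [fB, getD_prefix (seq_prefix A B b₀ h) hn']

theorem fB_mem (A : Set ℕ) {B : Set ℕ} {b₀ : ℕ} (hb : b₀ ∈ B) (n : ℕ) : fB A B b₀ n ∈ B := by
  have hn' : n < (seq A B b₀ (n+1)).length :=
    lt_of_lt_of_le (Nat.lt_succ_self n) (seq_len A B b₀ (n+1))
  rw [fB, List.getD_eq_getElem _ _ hn']
  exact seq_good A B hb (n+1) _ (List.getElem_mem _)

theorem fB_surj (A : Set ℕ) {B : Set ℕ} {b₀ : ℕ} (hb : b₀ ∈ B) :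
    ∀ k ∈ B, ∃ n, fB A B b₀ n = k := by
  intro k hk
  classical
  obtain ⟨ρ, hseq, -⟩ := seq_succ A B b₀ k
  refine ⟨ρ.length, ?_⟩
  have hlen : ρ.length < (seq A B b₀ (k+1)).length := by
    rw [hseq, List.length_append]; simp
  have hval : (seq A B b₀ (k+1)).getD ρ.length 0 = gB B b₀ k := by
    rw [hseq, List.getD_eq_getElem _ _ (by rw [hseq] at hlen; exact hlen)]
    exact List.getElem_concat_length rfl _
  have hgB : gB B b₀ k = k := by rw [gB, if_pos hk]
  have hn' : ρ.length < (seq A B b₀ (ρ.length+1)).length :=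
    lt_of_lt_of_le (Nat.lt_succ_self _) (seq_len A B b₀ _)
  rcases le_total (ρ.length + 1) (k+1) with h | h
  · rw [fB, ← getD_prefix (seq_prefix A B b₀ h) hn', hval, hgB]
  · rw [fB, getD_prefix (seq_prefix A B b₀ h) hlen, hval, hgB]

theorem backward {A B : Set ℕ}
    (H : ∀ C : Set ℕ, EnumReducible B (setJoin C Cᶜ) → EnumReducible A (setJoin C Cᶜ)) :
    EnumReducible A B := by
  classical
  by_cases hBe : ∃ b₀, b₀ ∈ B
  · obtain ⟨b₀, hb⟩ := hBe
    by_contra hAB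
    set f : ℕ → ℕ := fB A B b₀ with hf
    have hBJ : EnumReducible B (setJoin (Cf f) (Cf f)ᶜ) :=
      B_red (fun n => fB_mem A hb n) (fB_surj A hb)
    obtain ⟨W, hWre, hWmem⟩ := H (Cf f) hBJ
    obtain ⟨c, hc⟩ := re_code hWre
    set s₀ : ℕ := Encodable.encode c with hs₀
    have hofNat : ofNat Code s₀ = c := ofNat_encode c
    by_cases hQ : Q A B s₀ (seq A B b₀ s₀)
    · obtain ⟨hpre, hgood, k, d, hkA, hdom, hSF⟩ := hQ.choose_spec
      have hτpre : hQ.choose <+: seq A B b₀ (s₀+1) := by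
        rw [seq, dif_pos hQ]
        exact List.prefix_append _ _
      have hext : Extends hQ.choose f :=
        Extends.of_prefix hτpre (fB_extends A B b₀ (s₀+1))
      have hbits := SF_sat hSF hext
      have hkW : (k, d) ∈ W := (hc (k, d)).2 (by rwa [hofNat] at hdom)
      exact hkA ((hWmem k).2 ⟨d, hkW, hbits⟩)
    · have hDA : {k | ∃ d, EvalDom c (k, d) ∧
          ∃ τ, (seq A B b₀ s₀) <+: τ ∧ Good B τ ∧ SF τ d} = A := by
        ext k
        constructor
        · rintro ⟨d, hdom, τ, hpre, hgood, hSF⟩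
          by_contra hkA
          exact hQ ⟨τ, hpre, hgood, k, d, hkA, by rwa [hofNat], hSF⟩
        · intro hk
          obtain ⟨d, hdW, hdbits⟩ := (hWmem k).1 hk
          refine ⟨d, (hc (k, d)).1 hdW, extList (seq A B b₀ s₀) f d,
            extList_prefix _ _ _, ?_, SF_ext hdbits (fB_extends A B b₀ s₀)⟩
          intro x hx
          rcases extList_mem hx with h | ⟨n, rfl⟩
          · exact seq_good A B hb s₀ x h
          · exact fB_mem A hb n
      have hred := Dset_red B c (seq A B b₀ s₀) (seq_good A B hb s₀)
      rw [hDA] at hred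
      exact hAB hred
  · -- B is empty
    push_neg at hBe
    have h0 : EnumReducible B (setJoin ∅ (∅ᶜ : Set ℕ)) := by
      refine ⟨∅, re_of_exists_bool (g := fun _ _ => false)
        ((Primrec.const false).to₂) (fun a => by simp), fun k => ?_⟩
      simp [hBe k]
    obtain ⟨W, hWre, hWmem⟩ := H ∅ h0
    obtain ⟨fW, hfWp, hfWmono, hfW⟩ := (re_iff _).1 hWre
    have hJ : ∀ i : ℕ, i ∈ setJoin ∅ (∅ᶜ : Set ℕ) ↔ i % 2 = 1 := by
      intro i
      simp [setJoin]
    refine ⟨{x | ∃ N, (fW (x.1, N.unpair.1) N.unpair.2 &&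
      ((List.range N.unpair.1).all fun i => !(N.unpair.1.testBit i) || decide (i % 2 = 1)))
        = true}, re_of_exists_bool ?_ (fun _ => Iff.rfl), fun k => ?_⟩
    · have pd : Primrec fun p : (ℕ×ℕ)×ℕ => p.2.unpair.1 :=
        Primrec.fst.comp (Primrec.unpair.comp .snd)
      have h1 : Primrec fun p : (ℕ×ℕ)×ℕ => fW (p.1.1, p.2.unpair.1) p.2.unpair.2 :=
        hfWp.comp ((Primrec.fst.comp .fst).pair pd)
          (Primrec.snd.comp (Primrec.unpair.comp .snd))
      have h2 : Primrec fun p : (ℕ×ℕ)×ℕ =>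
          (List.range p.2.unpair.1).all fun i => !(p.2.unpair.1.testBit i) ||
            decide (i % 2 = 1) := by
        apply list_all_primrec (Primrec.list_range.comp pd)
        have hb1 : Primrec fun q : ((ℕ×ℕ)×ℕ)×ℕ => !(q.1.2.unpair.1.testBit q.2) :=
          Primrec.not.comp (testBit_primrec.comp (pd.comp .fst) .snd)
        have hb2 : Primrec fun q : ((ℕ×ℕ)×ℕ)×ℕ => decide (q.2 % 2 = 1) :=
          (Primrec.eq.comp (Primrec.nat_mod.comp .snd (Primrec.const 2)) (Primrec.const 1)).decide
        exact (Primrec.or.comp hb1 hb2).to₂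
      exact (Primrec.and.comp h1 h2).to₂
    · constructor
      · intro hk
        obtain ⟨d, hdW, hdbits⟩ := (hWmem k).1 hk
        obtain ⟨s, hs⟩ := (hfW (k, d)).1 hdW
        refine ⟨0, ⟨Nat.pair d s, ?_⟩, ?_⟩
        · simp only [Nat.unpair_pair, Bool.and_eq_true]
          refine ⟨hs, List.all_eq_true.2 fun i _ => ?_⟩
          rcases hbit : d.testBit i with _ | _
          · simp
          · simp only [Bool.not_true, Bool.false_or, decide_eq_true_eq]
            exact (hJ i).1 (hdbits i hbit)
        · intro i hi
          rw [Nat.zero_testBit] at hi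
          exact absurd hi (by simp)
      · rintro ⟨d', ⟨N, hg⟩, -⟩
        simp only [Bool.and_eq_true] at hg
        obtain ⟨hw, hall⟩ := hg
        apply (hWmem k).2
        refine ⟨N.unpair.1, (hfW _).2 ⟨_, hw⟩, ?_⟩
        intro i hi
        have := List.all_eq_true.1 hall i (List.mem_range.2 (testBit_lt hi))
        simp only [hi, Bool.not_true, Bool.false_or, decide_eq_true_eq] at this
        exact (hJ i).2 this


end Selman

/-- **Selman–Rozinas theorem**: `A ≤ₑ B` iff for every `C ⊆ ℕ`,
`B ≤ₑ C ⊕ Cᶜ` implies `A ≤ₑ C ⊕ Cᶜ`. -/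
theorem selman_rozinas (A B : Set ℕ) :
    EnumReducible A B ↔
      ∀ C : Set ℕ, EnumReducible B (setJoin C Cᶜ) → EnumReducible A (setJoin C Cᶜ) := by
  constructor
  · intro h C hBC
    exact Selman.enum_trans h hBC
  · exact Selman.backward
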